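/- Let G be a group, G_1 and G_2 two commuting subgroups with G = G_1 G_2, and for a subgroup X ≤ G define π_1(X) = { g ∈ G_1 : ∃ h ∈ G_2, g h ∈ X }. If X is a nilpotent subgroup of G of nilpotency class k, then π_1(X) is a nilpotent subgroup of G_1 of nilpotency class at most k + 1. -/

import Mathlib

theorem cartan_stmt6 {G : Type*} [Group G] (G₁ G₂ : Subgroup G)
    (hcomm : ∀ a ∈ G₁, ∀ b ∈ G₂, Commute a b)
    (hgen : ∀ g : G, ∃ a ∈ G₁, ∃ b ∈ G₂, g = a * b)
    (X : Subgroup G) [hX : Group.IsNilpotent X] (k : ℕ)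
    (hk : Group.nilpotencyClass X = k) :
    ∃ P : Subgroup G,
      (P : Set G) = {g : G | g ∈ G₁ ∧ ∃ h ∈ G₂, g * h ∈ X} ∧
      P ≤ G₁ ∧
      ∃ hP : Group.IsNilpotent P, Group.nilpotencyClass P ≤ k + 1 := by
  classical
  set P : Subgroup G :=
    { carrier := {g : G | g ∈ G₁ ∧ ∃ h ∈ G₂, g * h ∈ X}
      one_mem' := ⟨one_mem G₁, 1, one_mem G₂, by simpa using one_mem X⟩
      mul_mem' := by
        rintro g₁ g₂ ⟨hg₁, h₁, hh₁, hx₁⟩ ⟨hg₂, h₂, hh₂, hx₂⟩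
        refine ⟨mul_mem hg₁ hg₂, h₁ * h₂, mul_mem hh₁ hh₂, ?_⟩
        have heq : g₁ * g₂ * (h₁ * h₂) = (g₁ * h₁) * (g₂ * h₂) := by
          have h := (hcomm g₂ hg₂ h₁ hh₁).eq
          calc g₁ * g₂ * (h₁ * h₂) = g₁ * (g₂ * h₁) * (g₂⁻¹ * g₂) * h₂ := by group
            _ = g₁ * (h₁ * g₂) * (g₂⁻¹ * g₂) * h₂ := by rw [h]
            _ = (g₁ * h₁) * (g₂ * h₂) := by group
        rw [heq]; exact mul_mem hx₁ hx₂
      inv_mem' := by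
        rintro g ⟨hg, h, hh, hx⟩
        refine ⟨inv_mem hg, h⁻¹, inv_mem hh, ?_⟩
        have heq : g⁻¹ * h⁻¹ = (g * h)⁻¹ := by
          rw [mul_inv_rev, (hcomm g hg h hh).inv_inv.eq]
        rw [heq]; exact inv_mem hx } with hPdef
  have hPmem : ∀ g : G, g ∈ P ↔ g ∈ G₁ ∧ ∃ h ∈ G₂, g * h ∈ X := fun g => Iff.rfl
  refine ⟨P, rfl, fun g hg => ((hPmem g).mp hg).1, ?_⟩
  -- N = G₂ ∩ X as a subgroup of X; it is normal in X
  set N : Subgroup X := G₂.subgroupOf X with hNdef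
  haveI hNnormal : N.Normal := by
    constructor
    intro n hn x
    rw [hNdef, Subgroup.mem_subgroupOf] at hn ⊢
    obtain ⟨a, ha, b, hb, hab⟩ := hgen (x : G)
    push_cast
    rw [hab]
    have h1 : a * b * (n : G) * (a * b)⁻¹ = a * (b * n * b⁻¹) * a⁻¹ := by group
    rw [h1]
    have h2 : b * (n : G) * b⁻¹ ∈ G₂ := mul_mem (mul_mem hb hn) (inv_mem hb)
    rw [(hcomm a ha _ h2).eq]
    have h3 : b * (n : G) * b⁻¹ * a * a⁻¹ = b * n * b⁻¹ := by group
    rw [h3]; exact h2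
  -- choice of companion element
  have hspec : ∀ p : P, ∃ h ∈ G₂, (p : G) * h ∈ X := fun p => ((hPmem p).mp p.2).2
  choose hfn hfn₂ hfnX using hspec
  set fraw : P → X ⧸ N := fun p => QuotientGroup.mk ⟨(p : G) * hfn p, hfnX p⟩ with hfraw
  have welldef : ∀ (p : P) (h : G) (hh : h ∈ G₂) (hx : (p : G) * h ∈ X),
      fraw p = QuotientGroup.mk ⟨(p : G) * h, hx⟩ := by
    intro p h hh hx
    rw [hfraw]
    simp only
    rw [QuotientGroup.eq, hNdef, Subgroup.mem_subgroupOf]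
    push_cast
    have : ((p : G) * hfn p)⁻¹ * ((p : G) * h) = (hfn p)⁻¹ * h := by group
    rw [this]
    exact mul_mem (inv_mem (hfn₂ p)) hh
  have hmul : ∀ p q : P, fraw (p * q) = fraw p * fraw q := by
    intro p q
    have hcm : (q : G) * hfn p = hfn p * (q : G) := (hcomm q ((hPmem q).mp q.2).1 (hfn p) (hfn₂ p)).eq
    have heq : ((p * q : P) : G) * (hfn p * hfn q) = ((p : G) * hfn p) * ((q : G) * hfn q) := by
      push_cast
      calc (p : G) * q * (hfn p * hfn q)
          = (p : G) * (q * hfn p) * ((q : G)⁻¹ * q) * hfn q := by group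
        _ = (p : G) * (hfn p * q) * ((q : G)⁻¹ * q) * hfn q := by rw [hcm]
        _ = ((p : G) * hfn p) * ((q : G) * hfn q) := by group
    have hx : ((p * q : P) : G) * (hfn p * hfn q) ∈ X := by
      rw [heq]; exact mul_mem (hfnX p) (hfnX q)
    rw [welldef (p * q) (hfn p * hfn q) (mul_mem (hfn₂ p) (hfn₂ q)) hx]
    rw [hfraw]
    simp only
    rw [← QuotientGroup.mk_mul]
    congr 1
    ext
    push_cast
    rw [← heq]
    push_cast
    ring_nf
  set f : P →* X ⧸ N := MonoidHom.mk' fraw hmul with hfdef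
  have hker : f.ker ≤ Subgroup.center P := by
    intro p hp
    rw [MonoidHom.mem_ker] at hp
    have hp' : fraw p = 1 := hp
    rw [hfraw] at hp'
    simp only at hp'
    rw [QuotientGroup.eq_one_iff, hNdef, Subgroup.mem_subgroupOf] at hp'
    have hpG2 : (p : G) ∈ G₂ := by
      have : (p : G) = ((p : G) * hfn p) * (hfn p)⁻¹ := by group
      rw [this]
      exact mul_mem hp' (inv_mem (hfn₂ p))
    rw [Subgroup.mem_center_iff]
    intro q
    ext
    push_cast
    exact (hcomm q ((hPmem q).mp q.2).1 p hpG2).eq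
  haveI hQnil : Group.IsNilpotent (X ⧸ N) := inferInstance
  have hPnil : Group.IsNilpotent P := isNilpotent_of_ker_le_center f hker
  refine ⟨hPnil, ?_⟩
  have h1 := nilpotencyClass_le_of_ker_le_center f hker
  have h2 : Group.nilpotencyClass (X ⧸ N) ≤ Group.nilpotencyClass X :=
    nilpotencyClass_quotient_le N
  omega
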